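/- For every integer p ≥ 0, ⌊(p+2)!/e⌋ = ⌊(p+1)!/e⌋ + (p+1) · ⌊((p+1)! + 1)/e⌋. -/

import Mathlib

open Finset Filter NormedSpace

private lemma deran_div (n : ℕ) :
    (numDerangements n : ℝ) / n.factorial =
      ∑ k ∈ Finset.range (n + 1), (-1 : ℝ) ^ k / k.factorial := by
  rw [← Int.cast_natCast, numDerangements_sum]
  push_cast
  rw [Finset.sum_div]
  refine Finset.sum_congr rfl ?_
  intro k hk
  have h_le : k ≤ n := Finset.mem_range_succ_iff.mp hk
  rw [Nat.ascFactorial_eq_div, add_tsub_cancel_of_le h_le]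
  push_cast [Nat.factorial_dvd_factorial h_le]
  field_simp [Nat.factorial_ne_zero]

private lemma partial_tendsto :
    Tendsto (fun n => ∑ i ∈ range n, (-1 : ℝ) ^ i * ((i.factorial : ℝ))⁻¹) atTop
      (nhds (Real.exp (-1))) := by
  have h : HasSum (fun n : ℕ => (-1 : ℝ) ^ n / n.factorial) (Real.exp (-1)) := by
    rw [Real.exp_eq_exp_ℝ]
    exact expSeries_div_hasSum_exp (-1 : ℝ)
  simpa [div_eq_mul_inv] using h.tendsto_sum_nat

private lemma fact_antitone : Antitone (fun i : ℕ => ((i.factorial : ℝ))⁻¹) := by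
  intro i j hij
  simp only
  have h1 : (0 : ℝ) < i.factorial := by positivity
  have h2 : (i.factorial : ℝ) ≤ j.factorial := by
    exact_mod_cast Nat.factorial_le hij
  exact inv_anti₀ h1 h2

private lemma sum_lower (k : ℕ) :
    ∑ i ∈ range (2 * k), (-1 : ℝ) ^ i / i.factorial ≤ Real.exp (-1) := by
  simpa [div_eq_mul_inv] using fact_antitone.alternating_series_le_tendsto partial_tendsto k

private lemma sum_upper (k : ℕ) :
    Real.exp (-1) ≤ ∑ i ∈ range (2 * k + 1), (-1 : ℝ) ^ i / i.factorial := by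
  simpa [div_eq_mul_inv] using fact_antitone.tendsto_le_alternating_series partial_tendsto k

private lemma fact_lt (a b : ℕ) (ha : 0 < a) (hab : a < b) :
    (1 : ℝ) / b.factorial < 1 / a.factorial := by
  have h : (a.factorial : ℝ) < b.factorial := by
    exact_mod_cast (Nat.factorial_lt ha).mpr hab
  have h0 : (0 : ℝ) < a.factorial := by positivity
  exact one_div_lt_one_div_of_lt h0 h

private lemma strict_lower (k : ℕ) (hk : 1 ≤ k) :
    ∑ i ∈ range (2 * k), (-1 : ℝ) ^ i / i.factorial < Real.exp (-1) := by
  refine lt_of_lt_of_le ?_ (sum_lower (k + 1))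
  rw [show 2 * (k + 1) = 2 * k + 1 + 1 by ring, sum_range_succ, sum_range_succ]
  have h1 : (-1 : ℝ) ^ (2 * k) = 1 := by simp [pow_mul]
  have h2 : (-1 : ℝ) ^ (2 * k + 1) = -1 := by simp [pow_succ, pow_mul]
  rw [h1, h2]
  have := fact_lt (2 * k) (2 * k + 1) (by omega) (by omega)
  have hpos : (0 : ℝ) < (2 * k).factorial := by positivity
  rw [one_div, one_div] at this
  simp only [neg_div, one_div]
  linarith

private lemma strict_upper (k : ℕ) :
    Real.exp (-1) < ∑ i ∈ range (2 * k + 1), (-1 : ℝ) ^ i / i.factorial := by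
  refine lt_of_le_of_lt (sum_upper (k + 1)) ?_
  rw [show 2 * (k + 1) + 1 = 2 * k + 1 + 1 + 1 by ring, sum_range_succ, sum_range_succ]
  have h1 : (-1 : ℝ) ^ (2 * k + 1) = -1 := by simp [pow_succ, pow_mul]
  have h2 : (-1 : ℝ) ^ (2 * k + 1 + 1) = 1 := by simp [pow_succ, pow_mul]
  rw [h1, h2]
  have := fact_lt (2 * k + 1) (2 * k + 2) (by omega) (by omega)
  rw [one_div, one_div] at this
  simp only [neg_div, one_div]
  linarith

private lemma deran_eq (n : ℕ) :
    (numDerangements n : ℝ) =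
      n.factorial * ∑ k ∈ Finset.range (n + 1), (-1 : ℝ) ^ k / k.factorial := by
  have h := deran_div n
  have hfac : (0 : ℝ) < n.factorial := by positivity
  field_simp at h
  linarith [h]

private lemma succ_sum (n : ℕ) :
    ∑ k ∈ Finset.range (n + 2), (-1 : ℝ) ^ k / k.factorial =
      ∑ k ∈ Finset.range (n + 1), (-1 : ℝ) ^ k / k.factorial
        + (-1 : ℝ) ^ (n + 1) / (n + 1).factorial := by
  rw [Finset.sum_range_succ]

private lemma fact_ratio (n : ℕ) :
    (n.factorial : ℝ) * (1 / (n + 1).factorial) = 1 / (n + 1) := by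
  rw [Nat.factorial_succ]
  push_cast
  have h1 : (0 : ℝ) < n.factorial := by positivity
  have h2 : (0 : ℝ) < (n : ℝ) + 1 := by positivity
  field_simp

/-- bounds for odd n : D n < n! * e⁻¹ < D n + 1/(n+1) -/
private lemma bound_odd (n : ℕ) (hn : Odd n) :
    (numDerangements n : ℝ) < n.factorial * Real.exp (-1) ∧
      n.factorial * Real.exp (-1) < numDerangements n + 1 / (n + 1) := by
  obtain ⟨m, hm⟩ := hn
  have hfac : (0 : ℝ) < n.factorial := by positivity
  have hlow : ∑ k ∈ Finset.range (n + 1), (-1 : ℝ) ^ k / k.factorial < Real.exp (-1) := by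
    have := strict_lower (m + 1) (by omega)
    have he : 2 * (m + 1) = n + 1 := by omega
    rwa [he] at this
  have hup : Real.exp (-1) < ∑ k ∈ Finset.range (n + 1), (-1 : ℝ) ^ k / k.factorial
      + 1 / (n + 1).factorial := by
    have := strict_upper (m + 1)
    have he : 2 * (m + 1) + 1 = n + 2 := by omega
    rw [he, succ_sum] at this
    have hsgn : (-1 : ℝ) ^ (n + 1) = 1 := by
      have : Even (n + 1) := ⟨m + 1, by omega⟩
      exact Even.neg_one_pow this
    rw [hsgn] at this
    linarith
  constructor
  · rw [deran_eq]
    exact (mul_lt_mul_iff_right₀ hfac).mpr hlow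
  · rw [deran_eq]
    have h2 := (mul_lt_mul_iff_right₀ hfac).mpr hup
    rw [mul_add, fact_ratio] at h2
    linarith

/-- bounds for even n ≥ 1 : D n - 1/(n+1) < n! * e⁻¹ < D n -/
private lemma bound_even (n : ℕ) (hn : Even n) :
    (numDerangements n : ℝ) - 1 / (n + 1) < n.factorial * Real.exp (-1) ∧
      n.factorial * Real.exp (-1) < numDerangements n := by
  obtain ⟨m, hm⟩ := hn
  have hfac : (0 : ℝ) < n.factorial := by positivity
  have hup : Real.exp (-1) < ∑ k ∈ Finset.range (n + 1), (-1 : ℝ) ^ k / k.factorial := by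
    have := strict_upper m
    have he : 2 * m + 1 = n + 1 := by omega
    rwa [he] at this
  have hlow : ∑ k ∈ Finset.range (n + 1), (-1 : ℝ) ^ k / k.factorial
      - 1 / (n + 1).factorial < Real.exp (-1) := by
    have := strict_lower (m + 1) (by omega)
    have he : 2 * (m + 1) = n + 2 := by omega
    rw [he, succ_sum] at this
    have hsgn : (-1 : ℝ) ^ (n + 1) = -1 := by
      have : Odd (n + 1) := by
        refine ⟨m, by omega⟩
      exact Odd.neg_one_pow this
    rw [hsgn] at this
    rw [neg_div] at this
    linarith
  constructor
  · rw [deran_eq]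
    have h2 := (mul_lt_mul_iff_right₀ hfac).mpr hlow
    rw [mul_sub, fact_ratio] at h2
    linarith
  · rw [deran_eq]
    exact (mul_lt_mul_iff_right₀ hfac).mpr hup

private lemma exp_inv_gt : (1 : ℝ) / 3 < Real.exp (-1) := by
  rw [Real.exp_neg]
  have h1 : Real.exp 1 < 3 := by
    have := Real.exp_one_lt_d9
    linarith
  have h0 : (0 : ℝ) < Real.exp 1 := Real.exp_pos 1
  rw [one_div, lt_inv_comm₀ (by norm_num) h0]
  · linarith

private lemma exp_inv_lt : Real.exp (-1) < 1 / 2 := by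
  rw [Real.exp_neg]
  have h1 : (2 : ℝ) < Real.exp 1 := by
    have := Real.exp_one_gt_d9
    linarith
  rw [one_div, inv_lt_comm₀ (Real.exp_pos 1) (by norm_num)]
  norm_num
  linarith

private lemma div_exp (x : ℝ) : x / Real.exp 1 = x * Real.exp (-1) := by
  rw [Real.exp_neg, div_eq_mul_inv]

/-- floor of n!/e for odd n -/
private lemma floorA_odd (n : ℕ) (hn : Odd n) :
    ⌊(n.factorial : ℝ) / Real.exp 1⌋ = numDerangements n := by
  obtain ⟨h1, h2⟩ := bound_odd n hn
  rw [div_exp, Int.floor_eq_iff]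
  have hn1 : (1 : ℝ) / (n + 1) ≤ 1 := by
    rw [div_le_one (by positivity)]; linarith [Nat.cast_nonneg (α := ℝ) n]
  constructor
  · push_cast; linarith
  · push_cast; linarith

/-- floor of n!/e for even n -/
private lemma floorA_even (n : ℕ) (hn : Even n) :
    ⌊(n.factorial : ℝ) / Real.exp 1⌋ = (numDerangements n : ℤ) - 1 := by
  obtain ⟨h1, h2⟩ := bound_even n hn
  rw [div_exp, Int.floor_eq_iff]
  have hn1 : (1 : ℝ) / (n + 1) ≤ 1 := by
    rw [div_le_one (by positivity)]; linarith [Nat.cast_nonneg (α := ℝ) n]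
  constructor
  · push_cast; linarith
  · push_cast; linarith

/-- floor of (n!+1)/e for n ≥ 1 -/
private lemma floorB (n : ℕ) (hn : 1 ≤ n) :
    ⌊((n.factorial : ℝ) + 1) / Real.exp 1⌋ = numDerangements n := by
  rw [div_exp, add_mul, one_mul, Int.floor_eq_iff]
  have hc1 := exp_inv_gt
  have hc2 := exp_inv_lt
  rcases Nat.even_or_odd n with he | ho
  · obtain ⟨h1, h2⟩ := bound_even n he
    have hn2 : 2 ≤ n := by
      rcases he with ⟨m, hm⟩; omega
    have hn1 : (1 : ℝ) / (n + 1) ≤ 1 / 3 := by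
      apply div_le_div_of_nonneg_left (by norm_num) (by norm_num)
      have : (2 : ℝ) ≤ n := by exact_mod_cast hn2
      linarith
    constructor
    · push_cast; linarith
    · push_cast; linarith
  · obtain ⟨h1, h2⟩ := bound_odd n ho
    have hn1 : (1 : ℝ) / (n + 1) ≤ 1 / 2 := by
      apply div_le_div_of_nonneg_left (by norm_num) (by norm_num)
      have : (1 : ℝ) ≤ n := by exact_mod_cast hn
      linarith
    constructor
    · push_cast; linarith
    · push_cast; linarith

theorem floor_factorial_identity (p : ℕ) :
    ⌊((p + 2).factorial : ℝ) / Real.exp 1⌋ =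
      ⌊((p + 1).factorial : ℝ) / Real.exp 1⌋ +
        (p + 1) * ⌊(((p + 1).factorial : ℝ) + 1) / Real.exp 1⌋ := by
  have hrec := numDerangements_succ (p + 1)
  rw [floorB (p + 1) (by omega)]
  rcases Nat.even_or_odd p with he | ho
  · -- p even : p+1 odd, p+2 even
    have h1 : Odd (p + 1) := Even.add_one he
    have h2 : Even (p + 2) := by rcases he with ⟨m, hm⟩; exact ⟨m + 1, by omega⟩
    rw [floorA_odd (p + 1) h1, floorA_even (p + 2) h2]
    have hsgn : ((-1 : ℤ)) ^ (p + 1) = -1 := Odd.neg_one_pow h1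
    rw [hsgn] at hrec
    push_cast at hrec ⊢
    linarith
  · -- p odd : p+1 even, p+2 odd
    have h1 : Even (p + 1) := Odd.add_one ho
    have h2 : Odd (p + 2) := by rcases ho with ⟨m, hm⟩; exact ⟨m + 1, by omega⟩
    rw [floorA_even (p + 1) h1, floorA_odd (p + 2) h2]
    have hsgn : ((-1 : ℤ)) ^ (p + 1) = 1 := Even.neg_one_pow h1
    rw [hsgn] at hrec
    push_cast at hrec ⊢
    linarith
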